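/- Let F : ℝ^{N×n} → ℝ be rank-one convex and suppose limsup_{|z|→∞} F(z)/|z|^q < ∞ for some 1 ≤ q < ∞. Then limsup_{|z|→∞} |F(z)|/|z|^q < ∞. -/

import Mathlib

noncomputable section

/-- The rank-one matrix `a ⊗ b ∈ ℝ^{N×n}` (with Hilbert–Schmidt structure). -/
def tensorHS {N n : ℕ} (a : EuclideanSpace ℝ (Fin N)) (b : EuclideanSpace ℝ (Fin n)) :
    EuclideanSpace ℝ (Fin N × Fin n) :=
  (WithLp.equiv 2 ((Fin N × Fin n) → ℝ)).symm fun p => a p.1 * b p.2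

/-- `F` is rank-one convex: `t ↦ F(z + t·a⊗b)` is convex for all `z, a, b`. -/
def RankOneConvex {N n : ℕ} (F : EuclideanSpace ℝ (Fin N × Fin n) → ℝ) : Prop :=
  ∀ (z : EuclideanSpace ℝ (Fin N × Fin n)) (a : EuclideanSpace ℝ (Fin N))
    (b : EuclideanSpace ℝ (Fin n)),
    ConvexOn ℝ Set.univ fun t : ℝ => F (z + t • tensorHS a b)

lemma aux_coord {ι : Type*} [Fintype ι] (x : EuclideanSpace ℝ ι) (j : ι) : |x j| ≤ ‖x‖ := by
  rw [EuclideanSpace.norm_eq]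
  have h1 : |x j| = Real.sqrt (‖x j‖ ^ 2) := by
    rw [Real.norm_eq_abs, Real.sqrt_sq_eq_abs, abs_abs]
  rw [h1]
  apply Real.sqrt_le_sqrt
  exact Finset.single_le_sum (f := fun i => ‖x i‖ ^ 2) (fun i _ => sq_nonneg _) (Finset.mem_univ j)

lemma aux_norm_le {ι : Type*} [Fintype ι] (x : EuclideanSpace ℝ ι) (m : ℝ) (hm : 0 ≤ m)
    (h : ∀ j, |x j| ≤ m) : ‖x‖ ≤ Real.sqrt (Fintype.card ι) * m := by
  rw [EuclideanSpace.norm_eq]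
  have hsum : ∑ i, ‖x i‖ ^ 2 ≤ (Fintype.card ι : ℝ) * m ^ 2 := by
    calc ∑ i, ‖x i‖ ^ 2 ≤ ∑ _i : ι, m ^ 2 := by
          apply Finset.sum_le_sum
          intro i _
          have := h i
          rw [Real.norm_eq_abs]
          nlinarith [abs_nonneg (x i)]
      _ = (Fintype.card ι : ℝ) * m ^ 2 := by
          rw [Finset.sum_const, Finset.card_univ, nsmul_eq_mul]
  calc Real.sqrt (∑ i, ‖x i‖ ^ 2) ≤ Real.sqrt ((Fintype.card ι : ℝ) * m ^ 2) :=
        Real.sqrt_le_sqrt hsum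
    _ = Real.sqrt (Fintype.card ι) * m := by
        rw [Real.sqrt_mul (by positivity), Real.sqrt_sq hm]

lemma tensor_basis_apply {N n : ℕ} (i : Fin N × Fin n) (j : Fin N × Fin n) :
    tensorHS (EuclideanSpace.single i.1 (1:ℝ)) (EuclideanSpace.single i.2 (1:ℝ)) j
      = if j = i then 1 else 0 := by
  simp only [tensorHS, WithLp.equiv_symm_apply, PiLp.toLp_apply, EuclideanSpace.single_apply]
  by_cases h1 : j.1 = i.1 <;> by_cases h2 : j.2 = i.2 <;>
    simp [h1, h2, Prod.ext_iff]

lemma step_ineq {N n : ℕ} {F : EuclideanSpace ℝ (Fin N × Fin n) → ℝ} (hF : RankOneConvex F)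
    (w : EuclideanSpace ℝ (Fin N × Fin n)) (i : Fin N × Fin n) (t : ℝ) :
    2 * F (w + t • tensorHS (EuclideanSpace.single i.1 (1:ℝ)) (EuclideanSpace.single i.2 (1:ℝ)))
      - F (w + (2*t) • tensorHS (EuclideanSpace.single i.1 (1:ℝ)) (EuclideanSpace.single i.2 (1:ℝ)))
      ≤ F w := by
  have hc := hF w (EuclideanSpace.single i.1 (1:ℝ)) (EuclideanSpace.single i.2 (1:ℝ))
  have h2 := hc.2 (Set.mem_univ (0:ℝ)) (Set.mem_univ (2*t))
    (by norm_num : (0:ℝ) ≤ 1/2) (by norm_num : (0:ℝ) ≤ 1/2) (by norm_num)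
  simp only [smul_eq_mul] at h2
  have e1 : (1/2 : ℝ) * 0 + (1/2 : ℝ) * (2*t) = t := by ring
  rw [e1] at h2
  have e2 : w + (0:ℝ) • tensorHS (EuclideanSpace.single i.1 (1:ℝ))
      (EuclideanSpace.single i.2 (1:ℝ)) = w := by
    rw [zero_smul, add_zero]
  rw [e2] at h2
  linarith

lemma key_lemma {N n : ℕ} {F : EuclideanSpace ℝ (Fin N × Fin n) → ℝ} (hF : RankOneConvex F)
    (q C R T : ℝ) (hq0 : 0 ≤ q) (hT1 : 1 ≤ T) (hTR : R ≤ T)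
    (hCR : ∀ w : EuclideanSpace ℝ (Fin N × Fin n), R ≤ ‖w‖ → F w ≤ C * ‖w‖ ^ q)
    (z : EuclideanSpace ℝ (Fin N × Fin n)) (hzT : T ≤ ‖z‖)
    (hzR : Real.sqrt (Fintype.card (Fin N × Fin n)) * (|R| + 2*T) ≤ ‖z‖) :
    ∀ (k : ℕ) (S : Finset (Fin N × Fin n)), (Finset.univ \ S).card = k →
      -(4 ^ k * (|F (WithLp.toLp 2 (fun _ => T) : EuclideanSpace ℝ (Fin N × Fin n))|
          + (max C 0) * (3 * Real.sqrt (Fintype.card (Fin N × Fin n)) * ‖z‖) ^ q))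
        ≤ F (WithLp.toLp 2 (fun j => if j ∈ S then T else z j) : EuclideanSpace ℝ (Fin N × Fin n)) := by
  classical
  set d : ℕ := Fintype.card (Fin N × Fin n) with hd
  set p : EuclideanSpace ℝ (Fin N × Fin n) := WithLp.toLp 2 (fun _ => T) with hp
  set A : ℝ := |F p| with hA
  have hA0 : 0 ≤ A := abs_nonneg _
  set C' : ℝ := max C 0 with hC'
  have hC'0 : 0 ≤ C' := le_max_right _ _
  have hCC' : C ≤ C' := le_max_left _ _
  have hsd : 0 ≤ Real.sqrt d := Real.sqrt_nonneg _
  have hzn : 0 ≤ ‖z‖ := norm_nonneg z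
  set B : ℝ := C' * (3 * Real.sqrt d * ‖z‖) ^ q with hB
  have hB0 : 0 ≤ B := mul_nonneg hC'0 (Real.rpow_nonneg (by positivity) q)
  intro k
  induction k with
  | zero =>
    intro S hS
    have hSuniv : (WithLp.toLp 2 (fun j => if j ∈ S then T else z j) : EuclideanSpace ℝ (Fin N × Fin n)) = p := by
      ext j
      have hj : j ∈ S := by
        by_contra hj
        have hmem : j ∈ Finset.univ \ S := Finset.mem_sdiff.mpr ⟨Finset.mem_univ _, hj⟩
        rw [Finset.card_eq_zero] at hS
        rw [hS] at hmem
        exact absurd hmem (Finset.notMem_empty j)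
      simp [hj, hp]
    rw [hSuniv]
    have := neg_abs_le (F p)
    simp only [pow_zero, one_mul]
    linarith
  | succ k ih =>
    intro S hS
    -- choose the coordinate i to modify
    obtain ⟨i, hiS, hER⟩ : ∃ i, i ∉ S ∧ (S.Nonempty ∨ |R| + 2*T ≤ |z i|) := by
      rcases S.eq_empty_or_nonempty with hSe | hSne
      · have hne : (Finset.univ : Finset (Fin N × Fin n)).Nonempty := by
          rw [← Finset.card_pos]
          have h0 : 0 < (Finset.univ \ S).card := by omega
          exact lt_of_lt_of_le h0 (Finset.card_le_card Finset.sdiff_subset)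
        obtain ⟨i, -, hmax⟩ := Finset.exists_max_image Finset.univ (fun j => |z j|) hne
        refine ⟨i, by simp [hSe], Or.inr ?_⟩
        have hnz : ‖z‖ ≤ Real.sqrt d * |z i| :=
          aux_norm_le z (|z i|) (abs_nonneg _) (fun j => hmax j (Finset.mem_univ j))
        have hd1 : (1:ℝ) ≤ Real.sqrt d := by
          rw [show (1:ℝ) = Real.sqrt 1 by rw [Real.sqrt_one]]
          apply Real.sqrt_le_sqrt
          have h0 : 0 < d := Fintype.card_pos_iff.mpr ⟨i⟩
          exact_mod_cast h0
        have h1 : Real.sqrt d * (|R| + 2*T) ≤ Real.sqrt d * |z i| := le_trans hzR hnz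
        have hpos : 0 < Real.sqrt d := lt_of_lt_of_le one_pos hd1
        exact le_of_mul_le_mul_left h1 hpos
      · obtain ⟨i, hi⟩ : (Finset.univ \ S).Nonempty := by
          rw [← Finset.card_pos]; omega
        exact ⟨i, (Finset.mem_sdiff.mp hi).2, Or.inl hSne⟩
    -- the three points
    set w : EuclideanSpace ℝ (Fin N × Fin n) := WithLp.toLp 2 (fun j => if j ∈ S then T else z j) with hw
    set w' : EuclideanSpace ℝ (Fin N × Fin n) :=
      WithLp.toLp 2 (fun j => if j ∈ insert i S then T else z j) with hw'
    set r : EuclideanSpace ℝ (Fin N × Fin n) :=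
      WithLp.toLp 2 (fun j => if j = i then 2 * T - z i else if j ∈ S then T else z j) with hr
    have hri : r i = 2 * T - z i := by rw [hr]; simp
    -- r is far from the origin
    have hrR : R ≤ ‖r‖ := by
      rcases hER with hSne | hzi
      · obtain ⟨j₀, hj₀⟩ := hSne
        have hji : j₀ ≠ i := fun h => hiS (h ▸ hj₀)
        have hcj : r j₀ = T := by rw [hr]; simp [if_neg hji, if_pos hj₀]
        have h5 : |r j₀| ≤ ‖r‖ := aux_coord r j₀
        rw [hcj, abs_of_pos (by linarith : (0:ℝ) < T)] at h5
        linarith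
      · have habs : |R| ≤ |2 * T - z i| := by
          have h1 : |z i| - |2*T| ≤ |z i - 2*T| := abs_sub_abs_le_abs_sub _ _
          rw [abs_sub_comm] at h1
          rw [abs_of_pos (by linarith : (0:ℝ) < 2*T)] at h1
          linarith
        have h5 : |r i| ≤ ‖r‖ := aux_coord r i
        rw [hri] at h5
        calc R ≤ |R| := le_abs_self R
          _ ≤ |2 * T - z i| := habs
          _ ≤ ‖r‖ := h5
    have hcard : (Finset.univ \ insert i S).card = k := by
      rw [Finset.sdiff_insert, Finset.card_erase_of_mem (Finset.mem_sdiff.mpr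
        ⟨Finset.mem_univ _, hiS⟩), hS]
      omega
    have ih' := ih (insert i S) hcard
    -- point identities
    have h1 : w + (T - z i) • tensorHS (EuclideanSpace.single i.1 (1:ℝ))
        (EuclideanSpace.single i.2 (1:ℝ)) = w' := by
      ext j
      simp only [PiLp.add_apply, PiLp.smul_apply, tensor_basis_apply, smul_eq_mul, hw, hw', PiLp.toLp_apply]
      by_cases hji : j = i
      · subst hji
        simp [if_neg hiS]
      · simp [hji, Finset.mem_insert]
    have h2 : w + (2 * (T - z i)) • tensorHS (EuclideanSpace.single i.1 (1:ℝ))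
        (EuclideanSpace.single i.2 (1:ℝ)) = r := by
      ext j
      simp only [PiLp.add_apply, PiLp.smul_apply, tensor_basis_apply, smul_eq_mul, hw, hr, PiLp.toLp_apply]
      by_cases hji : j = i
      · subst hji
        simp only [eq_self_iff_true, if_true, if_neg hiS, mul_one]
        ring
      · simp [hji]
    have hstep := step_ineq hF w i (T - z i)
    rw [h1, h2] at hstep
    -- upper bound on F r
    have hrK : ‖r‖ ≤ Real.sqrt d * (3 * ‖z‖) := by
      apply aux_norm_le r (3 * ‖z‖) (by positivity)
      intro j
      by_cases hji : j = i
      · subst hji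
        rw [hri]
        have ha1 : |2 * T - z j| ≤ |2*T| + |z j| := by
          have := abs_add_le (2*T) (-(z j))
          simpa [sub_eq_add_neg] using this
        rw [abs_of_pos (by linarith : (0:ℝ) < 2*T)] at ha1
        have ha2 : |z j| ≤ ‖z‖ := aux_coord z j
        linarith
      · have hcj : r j = if j ∈ S then T else z j := by rw [hr]; simp [if_neg hji]
        rw [hcj]
        by_cases hjS : j ∈ S
        · rw [if_pos hjS, abs_of_pos (by linarith : (0:ℝ) < T)]
          linarith
        · rw [if_neg hjS]
          have := aux_coord z j
          linarith
    have hFr : F r ≤ B := by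
      have hu1 := hCR r hrR
      have hu2 : C * ‖r‖ ^ q ≤ C' * ‖r‖ ^ q :=
        mul_le_mul_of_nonneg_right hCC' (Real.rpow_nonneg (norm_nonneg r) q)
      have hu3 : ‖r‖ ^ q ≤ (3 * Real.sqrt d * ‖z‖) ^ q := by
        apply Real.rpow_le_rpow (norm_nonneg r) _ hq0
        calc ‖r‖ ≤ Real.sqrt d * (3 * ‖z‖) := hrK
          _ = 3 * Real.sqrt d * ‖z‖ := by ring
      have hu4 : C' * ‖r‖ ^ q ≤ B := by
        rw [hB]
        exact mul_le_mul_of_nonneg_left hu3 hC'0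
      linarith
    -- combine
    have h4k : (1:ℝ) ≤ 4 ^ k := one_le_pow₀ (by norm_num)
    have hX : A + B ≤ 4 ^ k * (A + B) :=
      le_mul_of_one_le_left (add_nonneg hA0 hB0) h4k
    rw [pow_succ]
    nlinarith [hstep, ih', hFr, hX, hA0, hB0]

/-- If `F` is rank-one convex and `limsup_{|z|→∞} F(z)/|z|^q < ∞`, then
`limsup_{|z|→∞} |F(z)|/|z|^q < ∞`. -/
theorem rankOneConvex_growth_implication (N n : ℕ) (q : ℝ) (hq : 1 ≤ q)
    (F : EuclideanSpace ℝ (Fin N × Fin n) → ℝ) (hF : RankOneConvex F)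
    (h : ∃ C R : ℝ, ∀ z : EuclideanSpace ℝ (Fin N × Fin n),
      R ≤ ‖z‖ → F z ≤ C * ‖z‖ ^ q) :
    ∃ C R : ℝ, ∀ z : EuclideanSpace ℝ (Fin N × Fin n),
      R ≤ ‖z‖ → |F z| ≤ C * ‖z‖ ^ q := by
  classical
  obtain ⟨C, R, hCR⟩ := h
  set d : ℕ := Fintype.card (Fin N × Fin n) with hd
  set T : ℝ := max R 1 with hT
  have hT1 : (1:ℝ) ≤ T := le_max_right _ _
  have hTR : R ≤ T := le_max_left _ _
  set A : ℝ := |F (WithLp.toLp 2 (fun _ => T) : EuclideanSpace ℝ (Fin N × Fin n))| with hA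
  have hA0 : 0 ≤ A := abs_nonneg _
  set C' : ℝ := max C 0 with hC'
  have hC'0 : 0 ≤ C' := le_max_right _ _
  have hCC' : C ≤ C' := le_max_left _ _
  have hsd : 0 ≤ Real.sqrt d := Real.sqrt_nonneg _
  set K : ℝ := 3 * Real.sqrt d with hK
  have hK0 : 0 ≤ K := by positivity
  have hq0 : 0 ≤ q := le_trans zero_le_one hq
  have hKq0 : 0 ≤ K ^ q := Real.rpow_nonneg hK0 q
  set R₀ : ℝ := (Real.sqrt d + 1) * (|R| + 2 * T + 1) + 1 with hR0
  have hR01 : 1 ≤ R₀ := by nlinarith [abs_nonneg R]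
  have hR0T : T ≤ R₀ := by nlinarith [abs_nonneg R]
  have hR0R : R ≤ R₀ := by nlinarith [le_abs_self R, abs_nonneg R]
  have hR0sd : Real.sqrt d * (|R| + 2*T) ≤ R₀ := by nlinarith [abs_nonneg R]
  refine ⟨4 ^ d * (A + C' * K ^ q) + C', R₀, ?_⟩
  intro z hz
  have hzn : 0 ≤ ‖z‖ := norm_nonneg z
  have hz1 : (1:ℝ) ≤ ‖z‖ := le_trans hR01 hz
  have hzq1 : (1:ℝ) ≤ ‖z‖ ^ q := by
    calc (1:ℝ) = 1 ^ q := (Real.one_rpow q).symm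
      _ ≤ ‖z‖ ^ q := Real.rpow_le_rpow zero_le_one hz1 hq0
  have hzE : (WithLp.toLp 2 (fun j => if j ∈ (∅ : Finset (Fin N × Fin n)) then T else z j) :
      EuclideanSpace ℝ (Fin N × Fin n)) = z := by
    ext j; simp
  have hcardE : (Finset.univ \ (∅ : Finset (Fin N × Fin n))).card = d := by
    rw [Finset.sdiff_empty]
    exact Finset.card_univ
  have hkey := key_lemma hF q C R T hq0 hT1 hTR hCR z (le_trans hR0T hz)
    (le_trans hR0sd hz) d ∅ hcardE
  rw [hzE] at hkey
  have hkey' : -(4 ^ d * (A + C' * (K ^ q * ‖z‖ ^ q))) ≤ F z := by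
    have hBsplit : (3 * Real.sqrt (Fintype.card (Fin N × Fin n)) * ‖z‖) ^ q
        = K ^ q * ‖z‖ ^ q := by
      rw [show 3 * Real.sqrt (Fintype.card (Fin N × Fin n)) * ‖z‖ = K * ‖z‖ by rw [hK, hd],
        Real.mul_rpow hK0 hzn]
    rw [hBsplit] at hkey
    exact hkey
  have hup : F z ≤ C' * ‖z‖ ^ q := by
    have h1 := hCR z (le_trans hR0R hz)
    have h2 : C * ‖z‖ ^ q ≤ C' * ‖z‖ ^ q :=
      mul_le_mul_of_nonneg_right hCC' (Real.rpow_nonneg hzn q)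
    linarith
  rw [abs_le]
  have h4d : (0:ℝ) ≤ 4 ^ d := by positivity
  constructor
  · nlinarith [hkey', mul_nonneg (mul_nonneg h4d hA0) (sub_nonneg.mpr hzq1),
      mul_nonneg hC'0 (le_trans zero_le_one hzq1), mul_nonneg h4d hKq0,
      mul_nonneg (mul_nonneg h4d hC'0) hKq0]
  · nlinarith [hup, mul_nonneg (mul_nonneg h4d (add_nonneg hA0 (mul_nonneg hC'0 hKq0)))
      (le_trans zero_le_one hzq1)]
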